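/- Let ε > 0 and let (Γ, d) be a metric space in which any two distinct points are at distance at least ε. Let H(Γ) be the combinatorial horoball over Γ: the metric graph with vertex set Γ × ℕ, with an edge of length 1 joining (x,n) and (x,n+1) for each x ∈ Γ and n ∈ ℕ, and an edge of length e^{−n}·d(x,y) joining (x,n) and (y,n) for all distinct x,y ∈ Γ and n ∈ ℕ. Then there exists L ≥ 1, depending only on ε, such that for all x, y ∈ Γ, (1/L)·log(1 + d(x,y)) − L ≤ d_{H(Γ)}((x,0),(y,0)) ≤ L·log(1 + d(x,y)) + L. -/

import Mathlib

open scoped ENNReal Classical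

/-- The total length of a chain (finite path) of vertices, where consecutive
vertices are charged according to the edge-weight function `w`
(`w u v = ⊤` when `u`, `v` are not joined by an edge). -/
noncomputable def chainCost {V : Type*} (w : V → V → ℝ≥0∞) : List V → ℝ≥0∞
  | [] => 0
  | [_] => 0
  | u :: v :: l => w u v + chainCost w (v :: l)

/-- The path metric of the weighted graph with edge-weight function `w`:
the infimum of the lengths of chains from `u` to `v`. -/
noncomputable def pathDist {V : Type*} (w : V → V → ℝ≥0∞) (u v : V) : ℝ≥0∞ :=
  ⨅ (l : List V) (_ : l.head? = some u) (_ : l.getLast? = some v), chainCost w l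

/-- The edge weights of the combinatorial horoball over a metric space `Γ`:
vertices are `Γ × ℕ`; `(x,n)` and `(x,n+1)` are joined by an edge of length `1`,
and for `x ≠ y`, `(x,n)` and `(y,n)` are joined by an edge of length
`e^{-n}·d(x,y)`. All other pairs are not joined (weight `⊤`). -/
noncomputable def horoballWeight (Γ : Type*) [MetricSpace Γ] :
    Γ × ℕ → Γ × ℕ → ℝ≥0∞ := fun p q =>
  if p.1 = q.1 ∧ (q.2 = p.2 + 1 ∨ p.2 = q.2 + 1) then 1
  else if p.2 = q.2 ∧ p.1 ≠ q.1 then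
    ENNReal.ofReal (Real.exp (-(p.2 : ℝ)) * dist p.1 q.1)
  else ⊤

lemma pathDist_le_chainCost {V : Type*} (w : V → V → ℝ≥0∞) (l : List V) {u v : V}
    (h1 : l.head? = some u) (h2 : l.getLast? = some v) :
    pathDist w u v ≤ chainCost w l :=
  iInf_le_of_le l (iInf_le_of_le h1 (iInf_le _ h2))

lemma pathDist_self {V : Type*} (w : V → V → ℝ≥0∞) (u : V) : pathDist w u u = 0 := by
  have := pathDist_le_chainCost w [u] (u := u) (v := u) rfl rfl
  simpa [chainCost] using this

lemma pathDist_le_weight {V : Type*} (w : V → V → ℝ≥0∞) (u v : V) :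
    pathDist w u v ≤ w u v := by
  have := pathDist_le_chainCost w [u, v] (u := u) (v := v) rfl rfl
  simpa [chainCost] using this

lemma chainCost_append {V : Type*} (w : V → V → ℝ≥0∞) :
    ∀ (l1 l2 : List V) (a b : V), l1.getLast? = some a → l2.head? = some b →
      chainCost w (l1 ++ l2) = chainCost w l1 + w a b + chainCost w l2 := by
  intro l1
  induction l1 with
  | nil => intro l2 a b h; simp at h
  | cons c t ih =>
    intro l2 a b h1 h2
    cases t with
    | nil =>
      obtain ⟨b', t2, rfl⟩ : ∃ b' t2, l2 = b' :: t2 := by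
        cases l2 with
        | nil => simp at h2
        | cons b' t2 => exact ⟨b', t2, rfl⟩
      have hb : b' = b := by simpa using h2
      have ha : c = a := by simpa using h1
      subst hb; subst ha
      simp [chainCost]
    | cons d r =>
      have h1' : (d :: r).getLast? = some a := by
        simpa [List.getLast?_cons_cons] using h1
      calc chainCost w ((c :: d :: r) ++ l2)
          = w c d + chainCost w ((d :: r) ++ l2) := rfl
        _ = w c d + (chainCost w (d :: r) + w a b + chainCost w l2) := by
            rw [ih l2 a b h1' h2]
        _ = chainCost w (c :: d :: r) + w a b + chainCost w l2 := by
            show _ = w c d + chainCost w (d :: r) + w a b + chainCost w l2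
            ring

lemma pathDist_triangle {V : Type*} (w : V → V → ℝ≥0∞) (u m v : V) :
    pathDist w u v ≤ pathDist w u m + pathDist w m v := by
  have key : ∀ l1 l2 : List V, l1.head? = some u → l1.getLast? = some m →
      l2.head? = some m → l2.getLast? = some v →
      pathDist w u v ≤ chainCost w l1 + chainCost w l2 := by
    intro l1 l2 h1 h1' h2 h2'
    cases l2 with
    | nil => simp at h2
    | cons m' t2 =>
    have hm : m' = m := by simpa using h2
    rw [← hm] at h1'
    cases t2 with
    | nil =>
      have hmv : m' = v := by simpa using h2'
      rw [hmv] at h1'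
      calc pathDist w u v ≤ chainCost w l1 := pathDist_le_chainCost w l1 h1 h1'
        _ ≤ _ := by simp [chainCost]
    | cons h r =>
      have hhead : (l1 ++ (h :: r)).head? = some u := by
        cases l1 with
        | nil => simp at h1
        | cons a t => simpa using h1
      have hlast : (l1 ++ (h :: r)).getLast? = some v := by
        rw [List.getLast?_append_of_ne_nil _ (by simp)]
        simpa [List.getLast?_cons_cons] using h2'
      calc pathDist w u v ≤ chainCost w (l1 ++ (h :: r)) :=
            pathDist_le_chainCost w _ hhead hlast
        _ = chainCost w l1 + w m' h + chainCost w (h :: r) :=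
            chainCost_append w l1 (h :: r) m' h h1' rfl
        _ = chainCost w l1 + chainCost w (m' :: h :: r) := by
            simp [chainCost, add_assoc]
  conv_rhs => rw [pathDist, pathDist]
  simp only [ENNReal.iInf_add, ENNReal.add_iInf]
  refine le_iInf fun la => le_iInf fun ha => le_iInf fun ha' => le_iInf fun lb =>
    le_iInf fun hb => le_iInf fun hb' => ?_
  first
    | exact key la lb ha ha' hb hb'
    | exact key lb la hb hb' ha ha'

lemma chainCost_lower {V : Type*} (w : V → V → ℝ≥0∞) (φ : V → ℝ)
    (hφ : ∀ u v : V, ENNReal.ofReal |φ u - φ v| ≤ w u v) :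
    ∀ (l : List V) (u v : V), l.head? = some u → l.getLast? = some v →
      ENNReal.ofReal |φ u - φ v| ≤ chainCost w l := by
  intro l
  induction l with
  | nil => intro u v h; simp at h
  | cons a t ih =>
    intro u v hu hv
    have h0 : a = u := by simpa using hu
    subst h0
    cases t with
    | nil =>
      have h1 : a = v := by simpa using hv
      subst h1; simp [chainCost]
    | cons b r =>
      have hv' : (b :: r).getLast? = some v := by
        simpa [List.getLast?_cons_cons] using hv
      have ihb := ih b v rfl hv'
      calc ENNReal.ofReal |φ a - φ v|
          ≤ ENNReal.ofReal (|φ a - φ b| + |φ b - φ v|) :=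
            ENNReal.ofReal_le_ofReal (abs_sub_le _ _ _)
        _ ≤ ENNReal.ofReal |φ a - φ b| + ENNReal.ofReal |φ b - φ v| :=
            ENNReal.ofReal_add_le
        _ ≤ w a b + chainCost w (b :: r) := add_le_add (hφ a b) ihb
        _ = chainCost w (a :: b :: r) := rfl

lemma pathDist_lower {V : Type*} (w : V → V → ℝ≥0∞) (φ : V → ℝ)
    (hφ : ∀ u v : V, ENNReal.ofReal |φ u - φ v| ≤ w u v) (u v : V) :
    ENNReal.ofReal |φ u - φ v| ≤ pathDist w u v :=
  le_iInf fun l => le_iInf fun h1 => le_iInf fun h2 => chainCost_lower w φ hφ l u v h1 h2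

-- key real inequality for the Lipschitz check of the potential
lemma max_sub_max_le {a b n D : ℝ} (hD : 0 ≤ D) (h : Real.exp a ≤ Real.exp b + D) :
    max a n - max b n ≤ Real.exp (-n) * D := by
  set m := max b n with hm
  have hnm : n ≤ m := le_max_right _ _
  have h1 : Real.exp (max a n) ≤ Real.exp m + D := by
    rcases le_total a n with hc | hc
    · rw [max_eq_right hc]
      exact le_add_of_le_of_nonneg (Real.exp_le_exp.2 hnm) hD
    · rw [max_eq_left hc]
      exact h.trans (add_le_add_left (Real.exp_le_exp.2 (le_max_left _ _)) D)
  have h2 : max a n ≤ Real.log (Real.exp m + D) := by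
    have := Real.log_le_log (Real.exp_pos _) h1
    simpa [Real.log_exp] using this
  have hpos : (0:ℝ) < Real.exp m + D := by positivity
  have h3 : Real.log (Real.exp m + D) - m ≤ D * Real.exp (-m) := by
    have heq : Real.log (Real.exp m + D) - m
        = Real.log ((Real.exp m + D) * Real.exp (-m)) := by
      rw [Real.log_mul (ne_of_gt hpos) (Real.exp_ne_zero _), Real.log_exp]; ring
    rw [heq]
    have hx : (Real.exp m + D) * Real.exp (-m) = 1 + D * Real.exp (-m) := by
      rw [add_mul, ← Real.exp_add]; simp
    rw [hx]
    have hlog := Real.log_le_sub_one_of_pos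
      (show (0:ℝ) < 1 + D * Real.exp (-m) by positivity)
    linarith
  have h4 : D * Real.exp (-m) ≤ D * Real.exp (-n) :=
    mul_le_mul_of_nonneg_left (Real.exp_le_exp.2 (by linarith)) hD
  have : max a n - m ≤ D * Real.exp (-n) := by linarith
  calc max a n - max b n ≤ D * Real.exp (-n) := this
    _ = Real.exp (-n) * D := mul_comm _ _

noncomputable def horoPhi {Γ : Type*} [MetricSpace Γ] (x : Γ) (p : Γ × ℕ) : ℝ :=
  max (Real.log (1 + dist x p.1) - p.2) 0

lemma horoball_potential {Γ : Type*} [MetricSpace Γ] (x : Γ) (p q : Γ × ℕ) :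
    ENNReal.ofReal |horoPhi x p - horoPhi x q| ≤ horoballWeight Γ p q := by
  unfold horoballWeight horoPhi
  split_ifs with hA hB
  · obtain ⟨h1, h2⟩ := hA
    rw [h1]
    set a := Real.log (1 + dist x q.1) with ha
    have h3 : |max (a - (p.2:ℝ)) 0 - max (a - (q.2:ℝ)) 0| ≤ 1 := by
      refine (abs_max_sub_max_le_abs _ _ _).trans ?_
      have he : (a - (p.2:ℝ)) - (a - (q.2:ℝ)) = (q.2:ℝ) - (p.2:ℝ) := by ring
      rw [he]
      rcases h2 with h | h
      · rw [h]; push_cast; simp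
      · rw [h]; push_cast; simp [abs_of_nonpos]
    calc ENNReal.ofReal |max (a - (p.2:ℝ)) 0 - max (a - (q.2:ℝ)) 0|
        ≤ ENNReal.ofReal 1 := ENNReal.ofReal_le_ofReal h3
      _ = 1 := ENNReal.ofReal_one
  · obtain ⟨h1, h2⟩ := hB
    apply ENNReal.ofReal_le_ofReal
    rw [← h1]
    set n := (p.2 : ℝ) with hn
    set a := Real.log (1 + dist x p.1) with ha
    set b := Real.log (1 + dist x q.1) with hb
    have hpa : (0:ℝ) < 1 + dist x p.1 := by positivity
    have hpb : (0:ℝ) < 1 + dist x q.1 := by positivity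
    have ea : Real.exp a = 1 + dist x p.1 := Real.exp_log hpa
    have eb : Real.exp b = 1 + dist x q.1 := Real.exp_log hpb
    have key1 : max a n - max b n ≤ Real.exp (-n) * dist p.1 q.1 := by
      refine max_sub_max_le dist_nonneg ?_
      rw [ea, eb]
      have := dist_triangle x q.1 p.1
      have hcm : dist q.1 p.1 = dist p.1 q.1 := dist_comm _ _
      linarith
    have key2 : max b n - max a n ≤ Real.exp (-n) * dist p.1 q.1 := by
      refine max_sub_max_le dist_nonneg ?_
      rw [ea, eb]
      have := dist_triangle x p.1 q.1
      linarith
    have e1 : max (a - n) 0 = max a n - n := by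
      rw [← max_sub_sub_right a n n, sub_self]
    have e2 : max (b - n) 0 = max b n - n := by
      rw [← max_sub_sub_right b n n, sub_self]
    rw [e1, e2]
    have he : (max a n - n) - (max b n - n) = max a n - max b n := by ring
    rw [he, abs_sub_le_iff]
    exact ⟨key1, key2⟩
  · exact le_top

/-- for an `ε`-separated space `Γ`, the distance in the
combinatorial horoball `H(Γ)` between base points `(x,0)`, `(y,0)` is coarsely
`log(1 + d(x,y))`, with constant `L` depending only on `ε`. -/
theorem horoball_log_distance :
    ∀ ε : ℝ, 0 < ε → ∃ L : ℝ, 1 ≤ L ∧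
      ∀ (Γ : Type) [inst : MetricSpace Γ],
        (∀ x y : Γ, x ≠ y → ε ≤ dist x y) →
        ∀ x y : Γ,
          (1 / L) * Real.log (1 + dist x y) - L ≤
              (pathDist (horoballWeight Γ) (x, 0) (y, 0)).toReal ∧
            (pathDist (horoballWeight Γ) (x, 0) (y, 0)).toReal ≤
              L * Real.log (1 + dist x y) + L := by
  intro ε hε
  refine ⟨3, by norm_num, ?_⟩
  intro Γ inst hsep x y
  set w := horoballWeight Γ with hw
  set d := dist x y with hd
  have hd0 : 0 ≤ d := dist_nonneg
  have hlog0 : 0 ≤ Real.log (1 + d) := Real.log_nonneg (by linarith)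
  set n := ⌈Real.log (1 + d)⌉₊ with hn
  have hup : ∀ k : ℕ, pathDist w (x, 0) (x, k) ≤ (k : ℝ≥0∞) := by
    intro k; induction k with
    | zero => simp [pathDist_self]
    | succ k ih =>
      have step : w (x, k) (x, k + 1) = 1 := by
        simp [hw, horoballWeight]
      calc pathDist w (x, 0) (x, k + 1)
          ≤ pathDist w (x, 0) (x, k) + pathDist w (x, k) (x, k + 1) :=
            pathDist_triangle w _ _ _
        _ ≤ (k : ℝ≥0∞) + 1 :=
            add_le_add ih ((pathDist_le_weight w _ _).trans_eq step)
        _ = ((k + 1 : ℕ) : ℝ≥0∞) := by push_cast; ring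
  have hdown : ∀ k : ℕ, pathDist w (y, k) (y, 0) ≤ (k : ℝ≥0∞) := by
    intro k; induction k with
    | zero => simp [pathDist_self]
    | succ k ih =>
      have step : w (y, k + 1) (y, k) = 1 := by
        simp [hw, horoballWeight]
      calc pathDist w (y, k + 1) (y, 0)
          ≤ pathDist w (y, k + 1) (y, k) + pathDist w (y, k) (y, 0) :=
            pathDist_triangle w _ _ _
        _ ≤ 1 + (k : ℝ≥0∞) :=
            add_le_add ((pathDist_le_weight w _ _).trans_eq step) ih
        _ = ((k + 1 : ℕ) : ℝ≥0∞) := by push_cast; ring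
  have hacross : pathDist w (x, n) (y, n) ≤ ENNReal.ofReal (Real.exp (-(n:ℝ)) * d) := by
    by_cases hxy : x = y
    · subst hxy; rw [pathDist_self]; exact zero_le
    · have hwx : w (x, n) (y, n) = ENNReal.ofReal (Real.exp (-(n:ℝ)) * dist x y) := by
        simp [hw, horoballWeight, hxy]
      exact (pathDist_le_weight w _ _).trans_eq hwx
  have hnlog : Real.log (1 + d) ≤ (n : ℝ) := Nat.le_ceil _
  have hn1 : (n : ℝ) ≤ Real.log (1 + d) + 1 := le_of_lt (Nat.ceil_lt_add_one hlog0)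
  have hexp : Real.exp (-(n:ℝ)) * d ≤ 1 := by
    have h1 : Real.exp (-(n:ℝ)) ≤ Real.exp (-(Real.log (1 + d))) :=
      Real.exp_le_exp.2 (by linarith)
    have h2 : Real.exp (-(Real.log (1 + d))) = (1 + d)⁻¹ := by
      rw [Real.exp_neg, Real.exp_log (by linarith)]
    calc Real.exp (-(n:ℝ)) * d ≤ (1 + d)⁻¹ * d :=
          mul_le_mul_of_nonneg_right (h1.trans_eq h2) hd0
      _ = d / (1 + d) := by rw [inv_mul_eq_div]
      _ ≤ 1 := div_le_one_of_le₀ (by linarith) (by linarith)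
  have hexp0 : 0 ≤ Real.exp (-(n:ℝ)) * d := by positivity
  have hub : pathDist w (x, 0) (y, 0) ≤ ENNReal.ofReal (2 * Real.log (1 + d) + 3) := by
    calc pathDist w (x, 0) (y, 0)
        ≤ pathDist w (x, 0) (x, n) + pathDist w (x, n) (y, 0) := pathDist_triangle w _ _ _
      _ ≤ pathDist w (x, 0) (x, n) + (pathDist w (x, n) (y, n) + pathDist w (y, n) (y, 0)) :=
          add_le_add_right (pathDist_triangle w _ _ _) _
      _ ≤ (n : ℝ≥0∞) + (ENNReal.ofReal (Real.exp (-(n:ℝ)) * d) + (n : ℝ≥0∞)) :=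
          add_le_add (hup n) (add_le_add hacross (hdown n))
      _ = ENNReal.ofReal ((n:ℝ) + (Real.exp (-(n:ℝ)) * d + (n:ℝ))) := by
          rw [← ENNReal.ofReal_natCast n,
            ← ENNReal.ofReal_add hexp0 (Nat.cast_nonneg n),
            ← ENNReal.ofReal_add (Nat.cast_nonneg n) (by positivity)]
      _ ≤ ENNReal.ofReal (2 * Real.log (1 + d) + 3) :=
          ENNReal.ofReal_le_ofReal (by linarith)
  have hne : pathDist w (x, 0) (y, 0) ≠ ⊤ := ne_top_of_le_ne_top ENNReal.ofReal_ne_top hub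
  have hlb : ENNReal.ofReal (Real.log (1 + d)) ≤ pathDist w (x, 0) (y, 0) := by
    have hl := pathDist_lower w (horoPhi x) (horoball_potential x) (x, 0) (y, 0)
    have e1 : horoPhi x ((x, 0) : Γ × ℕ) = 0 := by
      simp [horoPhi]
    have e2 : horoPhi x ((y, 0) : Γ × ℕ) = Real.log (1 + d) := by
      simp only [horoPhi, Nat.cast_zero, sub_zero]
      exact max_eq_left hlog0
    rw [e1, e2, zero_sub, abs_neg, abs_of_nonneg hlog0] at hl
    exact hl
  constructor
  · have hmono := ENNReal.toReal_mono hne hlb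
    rw [ENNReal.toReal_ofReal hlog0] at hmono
    linarith
  · have hmono := ENNReal.toReal_mono ENNReal.ofReal_ne_top hub
    rw [ENNReal.toReal_ofReal (by linarith)] at hmono
    linarith
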